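/- Let {x_k}_{k≥0} ⊆ ℝ^N be a sequence such that for every k ≥ 1 there exist a symmetric matrix B_k ∈ ℝ^{N×N} whose eigenvalues all lie in [m_B, M_B], a step size γ_k > 0, and a quasi-Newton candidate x^q_k = x_{k−1} + γ_k d_k with d_k = −B_k⁻¹ ∇f(x_{k−1}), such that the Wolfe conditions hold at (x_{k−1}, d_k, γ_k), i.e. f(x^q_k) ≤ f(x_{k−1}) + c₁ γ_k ∇f(x_{k−1})^T d_k and ∇f(x^q_k)^T d_k ≥ c₂ ∇f(x_{k−1})^T d_k, and such that f(x_k) ≤ f(x^q_k) (in particular this covers both x_k = x^q_k and x_k chosen as an arbitrary alternative candidate x^s_k whenever f(x^s_k) ≤ f(x^q_k), as in the modified SPLR algorithm with candidate selection every S-th iteration). Then ‖∇f(x_k)‖ → 0 as k → ∞. -/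

import Mathlib

open scoped RealInnerProductSpace Matrix

lemma eig_ne_zero {N : ℕ} {B : Matrix (Fin N) (Fin N) ℝ} (hB : B.IsHermitian)
    {mB MB : ℝ} (hmB : 0 < mB) (heig : ∀ i, hB.eigenvalues i ∈ Set.Icc mB MB) (i : Fin N) :
    hB.eigenvalues i ≠ 0 := ne_of_gt (lt_of_lt_of_le hmB (heig i).1)

lemma det_unit {N : ℕ} {B : Matrix (Fin N) (Fin N) ℝ} (hB : B.IsHermitian)
    {mB MB : ℝ} (hmB : 0 < mB) (heig : ∀ i, hB.eigenvalues i ∈ Set.Icc mB MB) :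
    IsUnit B.det := by
  rw [hB.det_eq_prod_eigenvalues]
  exact (Finset.prod_ne_zero_iff.2 fun i _ => eig_ne_zero hB hmB heig i).isUnit

lemma inv_mulVec_eig {N : ℕ} {B : Matrix (Fin N) (Fin N) ℝ} (hB : B.IsHermitian)
    {mB MB : ℝ} (hmB : 0 < mB) (heig : ∀ i, hB.eigenvalues i ∈ Set.Icc mB MB) (i : Fin N) :
    B⁻¹ *ᵥ ⇑(hB.eigenvectorBasis i) = (hB.eigenvalues i)⁻¹ • ⇑(hB.eigenvectorBasis i) := by
  have h1 : B⁻¹ *ᵥ (B *ᵥ ⇑(hB.eigenvectorBasis i)) = ⇑(hB.eigenvectorBasis i) := by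
    rw [Matrix.mulVec_mulVec, Matrix.nonsing_inv_mul B (det_unit hB hmB heig), Matrix.one_mulVec]
  rw [hB.mulVec_eigenvectorBasis, Matrix.mulVec_smul] at h1
  have hlam := eig_ne_zero hB hmB heig i
  calc B⁻¹ *ᵥ ⇑(hB.eigenvectorBasis i)
      = (hB.eigenvalues i)⁻¹ • (hB.eigenvalues i • (B⁻¹ *ᵥ ⇑(hB.eigenvectorBasis i))) := by
        rw [smul_smul, inv_mul_cancel₀ hlam, one_smul]
    _ = (hB.eigenvalues i)⁻¹ • ⇑(hB.eigenvectorBasis i) := by rw [h1]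

lemma toEuc_inv_eig {N : ℕ} {B : Matrix (Fin N) (Fin N) ℝ} (hB : B.IsHermitian)
    {mB MB : ℝ} (hmB : 0 < mB) (heig : ∀ i, hB.eigenvalues i ∈ Set.Icc mB MB) (i : Fin N) :
    Matrix.toEuclideanLin B⁻¹ (hB.eigenvectorBasis i)
      = (hB.eigenvalues i)⁻¹ • hB.eigenvectorBasis i := by
  apply (WithLp.equiv 2 (Fin N → ℝ)).injective
  simp only [WithLp.equiv_apply, Matrix.ofLp_toEuclideanLin_apply, WithLp.ofLp_smul]
  exact inv_mulVec_eig hB hmB heig i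

lemma quad_bounds {N : ℕ} {B : Matrix (Fin N) (Fin N) ℝ} (hB : B.IsHermitian)
    {mB MB : ℝ} (hmB : 0 < mB) (hmM : mB ≤ MB)
    (heig : ∀ i, hB.eigenvalues i ∈ Set.Icc mB MB) (v : EuclideanSpace ℝ (Fin N)) :
    ‖v‖ ^ 2 / MB ≤ ⟪v, Matrix.toEuclideanLin B⁻¹ v⟫ ∧
      ‖Matrix.toEuclideanLin B⁻¹ v‖ ^ 2 ≤ ‖v‖ ^ 2 / mB ^ 2 := by
  set b := hB.eigenvectorBasis
  set c : Fin N → ℝ := fun i => b.repr v i with hc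
  have hv : v = ∑ i, c i • b i := (b.sum_repr v).symm
  have hTv : Matrix.toEuclideanLin B⁻¹ v = ∑ i, ((hB.eigenvalues i)⁻¹ * c i) • b i := by
    conv_lhs => rw [hv]
    rw [map_sum]
    refine Finset.sum_congr rfl fun i _ => ?_
    rw [map_smul, toEuc_inv_eig hB hmB heig i, smul_smul, mul_comm]
  have hnv : ‖v‖ ^ 2 = ∑ i, c i ^ 2 := by
    have := b.orthonormal.inner_sum c c Finset.univ
    rw [← hv] at this
    rw [← real_inner_self_eq_norm_sq, this]
    simp [sq]
  have hinner : ⟪v, Matrix.toEuclideanLin B⁻¹ v⟫ = ∑ i, (hB.eigenvalues i)⁻¹ * c i ^ 2 := by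
    rw [hTv]
    conv_lhs => rw [hv]
    rw [b.orthonormal.inner_sum]
    refine Finset.sum_congr rfl fun i _ => ?_
    simp [sq]; ring
  have hnTv : ‖Matrix.toEuclideanLin B⁻¹ v‖ ^ 2 = ∑ i, ((hB.eigenvalues i)⁻¹ * c i) ^ 2 := by
    have := b.orthonormal.inner_sum (fun i => (hB.eigenvalues i)⁻¹ * c i)
      (fun i => (hB.eigenvalues i)⁻¹ * c i) Finset.univ
    rw [← hTv] at this
    rw [← real_inner_self_eq_norm_sq, this]
    simp [sq]
  have hMB : 0 < MB := lt_of_lt_of_le hmB hmM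
  constructor
  · rw [hinner, hnv, Finset.sum_div]
    refine Finset.sum_le_sum fun i _ => ?_
    have h1 : hB.eigenvalues i ≤ MB := (heig i).2
    have h2 : 0 < hB.eigenvalues i := lt_of_lt_of_le hmB (heig i).1
    have : MB⁻¹ ≤ (hB.eigenvalues i)⁻¹ := inv_anti₀ h2 h1
    calc c i ^ 2 / MB = MB⁻¹ * c i ^ 2 := by ring
      _ ≤ (hB.eigenvalues i)⁻¹ * c i ^ 2 := by nlinarith [sq_nonneg (c i)]
  · rw [hnTv, hnv, Finset.sum_div]
    refine Finset.sum_le_sum fun i _ => ?_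
    have h1 : mB ≤ hB.eigenvalues i := (heig i).1
    have h2 : 0 < hB.eigenvalues i := lt_of_lt_of_le hmB h1
    have h3 : (hB.eigenvalues i)⁻¹ ≤ mB⁻¹ := inv_anti₀ hmB h1
    have h4 : 0 < (hB.eigenvalues i)⁻¹ := inv_pos.2 h2
    calc ((hB.eigenvalues i)⁻¹ * c i) ^ 2 = ((hB.eigenvalues i)⁻¹)^2 * c i ^ 2 := by ring
      _ ≤ (mB⁻¹)^2 * c i ^ 2 := by
          have h5 : ((hB.eigenvalues i)⁻¹)^2 ≤ (mB⁻¹)^2 := pow_le_pow_left₀ h4.le h3 2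
          nlinarith [sq_nonneg (c i)]
      _ = c i ^ 2 / mB ^ 2 := by field_simp

set_option maxHeartbeats 1000000 in
lemma descent_step {N : ℕ}
    (f : EuclideanSpace ℝ (Fin N) → ℝ)
    (L : ℝ) (hL : 0 < L)
    (hlip : ∀ x y, ‖gradient f x - gradient f y‖ ≤ L * ‖x - y‖)
    (c₁ c₂ mB MB : ℝ)
    (hc₁0 : 0 < c₁) (hc₂1 : c₂ < 1)
    (hmB : 0 < mB) (hmM : mB ≤ MB)
    (x : ℕ → EuclideanSpace ℝ (Fin N))
    (hstep : ∀ k : ℕ, ∃ (B : Matrix (Fin N) (Fin N) ℝ) (hB : B.IsHermitian) (γ : ℝ),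
      (∀ i, hB.eigenvalues i ∈ Set.Icc mB MB) ∧ 0 < γ ∧
      (let g := gradient f (x k)
       let d := -((Matrix.toEuclideanLin (B⁻¹)) g)
       let xq := x k + γ • d
       f xq ≤ f (x k) + c₁ * γ * ⟪g, d⟫ ∧
       ⟪gradient f xq, d⟫ ≥ c₂ * ⟪g, d⟫ ∧
       f (x (k + 1)) ≤ f xq)) (k : ℕ) :
    f (x (k+1)) ≤ f (x k)
      - (c₁ * (1 - c₂) * mB^2 / (L * MB^2)) * ‖gradient f (x k)‖^2 := by
  obtain ⟨B, hB, γ, heig, hγ, hW1, hW2, hAcc⟩ := hstep k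
  set g := gradient f (x k) with hg
  set d := -((Matrix.toEuclideanLin (B⁻¹)) g) with hd
  set xq := x k + γ • d with hxq

  have hMB : 0 < MB := lt_of_lt_of_le hmB hmM
  obtain ⟨hq1, hq2⟩ := quad_bounds hB hmB hmM heig g
  by_cases hg0 : g = 0
  · have hd0 : d = 0 := by rw [hd, hg0, map_zero, neg_zero]
    have : ⟪g, d⟫ = (0:ℝ) := by rw [hd0, inner_zero_right]
    have hfxq : f xq ≤ f (x k) := by
      calc f xq ≤ f (x k) + c₁ * γ * ⟪g, d⟫ := hW1
        _ = f (x k) := by rw [this]; ring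
    rw [hg0]
    simp only [norm_zero]
    calc f (x (k+1)) ≤ f xq := hAcc
      _ ≤ f (x k) := hfxq
      _ = f (x k) - (c₁ * (1 - c₂) * mB^2 / (L * MB^2)) * 0^2 := by ring
  · set G := ‖g‖ with hG
    have hGpos : 0 < G := norm_pos_iff.2 hg0
    set a := -⟪g, d⟫ with ha
    have hinner_d : ⟪g, d⟫ = -⟪g, (Matrix.toEuclideanLin (B⁻¹)) g⟫ := by
      rw [hd, inner_neg_right]
    have F1' : G^2 ≤ MB * a := by
      rw [ha, hinner_d, neg_neg]
      calc G^2 = MB * (G^2 / MB) := by field_simp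
        _ ≤ MB * ⟪g, (Matrix.toEuclideanLin (B⁻¹)) g⟫ :=
          mul_le_mul_of_nonneg_left hq1 hMB.le
    have hapos : 0 < a := by nlinarith [sq_nonneg G]
    set D := ‖d‖ with hD
    have hDd : D = ‖(Matrix.toEuclideanLin (B⁻¹)) g‖ := by rw [hD, hd, norm_neg]
    have F2' : mB^2 * D^2 ≤ G^2 := by
      rw [hDd]
      calc mB^2 * ‖(Matrix.toEuclideanLin (B⁻¹)) g‖^2 ≤ mB^2 * (G^2 / mB^2) :=
          mul_le_mul_of_nonneg_left hq2 (by positivity)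
        _ = G^2 := by field_simp
    have hDpos : 0 < D := by
      rcases lt_or_eq_of_le (norm_nonneg d) with h | h
      · exact h
      · exfalso
        have : d = 0 := norm_eq_zero.1 h.symm
        rw [this, inner_zero_right] at ha
        simp at ha
        nlinarith
    -- curvature + Lipschitz lower bound on γ
    have hcurv : ⟪gradient f xq - g, d⟫ ≥ (c₂ - 1) * ⟪g, d⟫ := by
      rw [inner_sub_left]
      linarith [hW2]
    have hlipb : ⟪gradient f xq - g, d⟫ ≤ L * γ * D^2 := by
      calc ⟪gradient f xq - g, d⟫ ≤ ‖gradient f xq - g‖ * ‖d‖ := real_inner_le_norm _ _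
        _ ≤ (L * ‖xq - x k‖) * ‖d‖ :=
          mul_le_mul_of_nonneg_right (hlip xq (x k)) (norm_nonneg d)
        _ = L * γ * D^2 := by
            rw [hxq]
            simp only [add_sub_cancel_left, norm_smul, Real.norm_eq_abs, abs_of_pos hγ]
            rw [← hD]; ring
    have F3 : (1 - c₂) * a ≤ γ * L * D^2 := by
      have h1 : (c₂ - 1) * ⟪g, d⟫ ≤ L * γ * D^2 := le_trans hcurv hlipb
      rw [ha]; nlinarith
    have k1 : mB^2 * D^2 * G^2 ≤ a^2 * MB^2 := by
      nlinarith [mul_le_mul_of_nonneg_right F2' (sq_nonneg G),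
        mul_le_mul F1' F1' (sq_nonneg G) (by nlinarith : (0:ℝ) ≤ MB * a)]
    have key : c₁ * (1 - c₂) * mB^2 * G^2 * D^2 ≤ (c₁ * γ * a * (L * MB^2)) * D^2 := by
      nlinarith [mul_le_mul_of_nonneg_left k1 (by nlinarith : (0:ℝ) ≤ c₁ * (1 - c₂)),
        mul_le_mul_of_nonneg_left F3 (mul_nonneg (mul_nonneg hc₁0.le hapos.le) (sq_nonneg MB))]
    have key2 : c₁ * (1 - c₂) * mB^2 * G^2 ≤ c₁ * γ * a * (L * MB^2) :=
      le_of_mul_le_mul_right key (by positivity)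
    have goal2 : (c₁ * (1 - c₂) * mB^2 / (L * MB^2)) * G^2 ≤ c₁ * γ * a := by
      rw [div_mul_eq_mul_div, div_le_iff₀ (by positivity)]
      linarith [key2]
    calc f (x (k+1)) ≤ f xq := hAcc
      _ ≤ f (x k) + c₁ * γ * ⟪g, d⟫ := hW1
      _ = f (x k) - c₁ * γ * a := by rw [ha]; ring
      _ ≤ f (x k) - (c₁ * (1 - c₂) * mB^2 / (L * MB^2)) * G^2 := by linarith


/-- Global convergence (`‖∇f(x_k)‖ → 0`) of the modified SPLR iteration,
where each step uses a symmetric matrix `B_k` with eigenvalues in `[m_B, M_B]`, a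
quasi-Newton candidate `x^q_k = x_{k−1} + γ_k d_k` with `d_k = −B_k⁻¹ ∇f(x_{k−1})`
satisfying the Wolfe conditions, and the accepted iterate satisfies `f(x_k) ≤ f(x^q_k)`. -/
theorem stmt1 (N : ℕ) (hN : 1 ≤ N)
    (f : EuclideanSpace ℝ (Fin N) → ℝ) (hf : Differentiable ℝ f)
    (hbdd : BddBelow (Set.range f))
    (L : ℝ) (hL : 0 < L)
    (hlip : ∀ x y, ‖gradient f x - gradient f y‖ ≤ L * ‖x - y‖)
    (c₁ c₂ mB MB : ℝ)
    (hc₁0 : 0 < c₁) (hc₁half : c₁ < 1 / 2) (hc₁₂ : c₁ < c₂) (hc₂1 : c₂ < 1)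
    (hmB : 0 < mB) (hmM : mB ≤ MB)
    (x : ℕ → EuclideanSpace ℝ (Fin N))
    (hstep : ∀ k : ℕ, ∃ (B : Matrix (Fin N) (Fin N) ℝ) (hB : B.IsHermitian) (γ : ℝ),
      (∀ i, hB.eigenvalues i ∈ Set.Icc mB MB) ∧ 0 < γ ∧
      (let g := gradient f (x k)
       let d := -((Matrix.toEuclideanLin (B⁻¹)) g)
       let xq := x k + γ • d
       f xq ≤ f (x k) + c₁ * γ * ⟪g, d⟫ ∧
       ⟪gradient f xq, d⟫ ≥ c₂ * ⟪g, d⟫ ∧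
       f (x (k + 1)) ≤ f xq)) :
    Filter.Tendsto (fun k => ‖gradient f (x k)‖) Filter.atTop (nhds 0) := by
  have hMB : 0 < MB := lt_of_lt_of_le hmB hmM
  set C := c₁ * (1 - c₂) * mB^2 / (L * MB^2) with hC
  have hCpos : 0 < C := by
    apply div_pos _ (by positivity)
    have : 0 < 1 - c₂ := by linarith
    positivity
  have hdec : ∀ k, f (x (k+1)) ≤ f (x k) - C * ‖gradient f (x k)‖^2 :=
    descent_step f L hL hlip c₁ c₂ mB MB hc₁0 hc₂1 hmB hmM x hstep
  have hanti : Antitone (fun k => f (x k)) := by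
    apply antitone_nat_of_succ_le
    intro k
    have h1 : 0 ≤ C * ‖gradient f (x k)‖^2 := mul_nonneg hCpos.le (sq_nonneg _)
    have := hdec k

    linarith
  have hbdd2 : BddBelow (Set.range fun k => f (x k)) := by
    obtain ⟨m, hm⟩ := hbdd
    exact ⟨m, by rintro y ⟨k, rfl⟩; exact hm ⟨x k, rfl⟩⟩
  have hconv := tendsto_atTop_ciInf hanti hbdd2
  set l := ⨅ k, f (x k)
  have hconv2 : Filter.Tendsto (fun k => f (x (k+1))) Filter.atTop (nhds l) :=
    hconv.comp (Filter.tendsto_add_atTop_nat 1)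
  have hdiff : Filter.Tendsto (fun k => f (x k) - f (x (k+1))) Filter.atTop (nhds 0) := by
    simpa using hconv.sub hconv2
  have hsq : Filter.Tendsto (fun k => ‖gradient f (x k)‖^2) Filter.atTop (nhds 0) := by
    apply squeeze_zero (fun k => sq_nonneg _)
      (g := fun k => (f (x k) - f (x (k+1))) / C)
    · intro k
      rw [le_div_iff₀ hCpos]
      have := hdec k
      linarith
    · simpa using hdiff.div_const C
  have := hsq.sqrt
  simpa [Real.sqrt_sq (norm_nonneg _)] using this
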